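/- arXiv:0906.3209 — 2 statements merged into one kernel-verified Lean document; each statement's English description precedes it below -/
import Mathlib

section
/- If L is a linear operator on a finite-dimensional real inner product space P, L is self-adjoint, and L preserves a chain of subspaces P₀ ⊂ P₁ ⊂ ... ⊂ Pₙ with dim Pₖ = k+1, then for each k there exists an eigenvector of L lying in Pₖ but not in Pₖ₋₁; in particular, if the corresponding eigenvalues are pairwise distinct, these eigenvectors are pairwise orthogonal. -/
open Module

/-- If a self-adjoint operator `L` on an `(n+1)`-dimensional real inner product space
preserves a complete flag `P 0 ⊂ P 1 ⊂ ⋯ ⊂ P n` with `dim (P k) = k + 1`, then for each `k`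
there is an eigenvector of `L` lying in `P k` but not in `P (k-1)`; moreover eigenvectors
for distinct eigenvalues are orthogonal. -/
theorem stmt3 (V : Type*) [NormedAddCommGroup V] [InnerProductSpace ℝ V]
    [FiniteDimensional ℝ V] (n : ℕ) (hdim : finrank ℝ V = n + 1)
    (L : V →ₗ[ℝ] V)
    (hsa : ∀ u v : V, inner ℝ (L u) v = (inner ℝ u (L v) : ℝ))
    (P : ℕ → Submodule ℝ V)
    (hrank : ∀ k ≤ n, finrank ℝ (P k) = k + 1)
    (hchain : ∀ k, k < n → P k < P (k + 1))
    (hinv : ∀ k ≤ n, ∀ v ∈ P k, L v ∈ P k) :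
    (∀ k ≤ n, ∃ v : V, v ≠ 0 ∧ v ∈ P k ∧ (k = 0 ∨ v ∉ P (k - 1)) ∧
        ∃ μ : ℝ, L v = μ • v) ∧
    (∀ (v w : V) (μ ν : ℝ), L v = μ • v → L w = ν • w → μ ≠ ν →
        (inner ℝ v w : ℝ) = 0) := by
  constructor
  · intro k hk
    have hinvk : ∀ v ∈ P k, L v ∈ P k := hinv k hk
    set T : (P k) →ₗ[ℝ] (P k) := L.restrict hinvk with hT
    have hTsym : T.IsSymmetric := by
      intro x y
      simpa [Submodule.coe_inner, hT, LinearMap.restrict_coe_apply] using hsa x.1 y.1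
    have htop : (⨆ μ : ℝ, Module.End.eigenspace T μ) = ⊤ :=
      Submodule.orthogonal_eq_bot_iff.mp hTsym.orthogonalComplement_iSup_eigenspaces_eq_bot
    -- The "bad" subspace of P k
    set W : Submodule ℝ (P k) := if k = 0 then ⊥ else (P (k - 1)).comap (P k).subtype with hW
    have hWlt : W ≠ ⊤ := by
      intro h
      rcases Nat.eq_zero_or_pos k with h0 | h0
      · rw [hW, if_pos h0] at h
        have hnt : Nontrivial (P k) := by
          have := hrank k hk
          exact Module.nontrivial_of_finrank_pos (R := ℝ) (by omega)
        exact absurd h bot_ne_top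
      · have hk0 : k ≠ 0 := h0.ne'
        rw [hW, if_neg hk0] at h
        have hle : P k ≤ P (k - 1) := by
          intro v hv
          have : (⟨v, hv⟩ : P k) ∈ Submodule.comap (P k).subtype (P (k - 1)) := by
            rw [h]; trivial
          exact this
        have h1 := Submodule.finrank_mono hle
        have h2 := hrank k hk
        have h3 := hrank (k - 1) (le_trans (Nat.sub_le k 1) hk)
        omega
    have : ∃ μ : ℝ, ¬ Module.End.eigenspace T μ ≤ W := by
      by_contra hcon
      push_neg at hcon
      exact hWlt (top_le_iff.mp (htop ▸ iSup_le hcon))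
    obtain ⟨μ, hμ⟩ := this
    obtain ⟨v, hv, hvW⟩ := SetLike.not_le_iff_exists.mp hμ
    refine ⟨v.1, ?_, v.2, ?_, μ, ?_⟩
    · intro h
      apply hvW
      have : v = 0 := Subtype.ext h
      simp [this]
    · rcases Nat.eq_zero_or_pos k with h0 | h0
      · exact Or.inl h0
      · refine Or.inr ?_
        intro hmem
        apply hvW
        rw [hW, if_neg h0.ne']
        exact hmem
    · have := congrArg Subtype.val (Module.End.mem_eigenspace_iff.mp hv)
      simpa [hT, LinearMap.restrict_apply] using this
  · intro v w μ ν hv hw hμν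
    have h1 : μ * (inner ℝ v w : ℝ) = ν * (inner ℝ v w : ℝ) := by
      have := hsa v w
      rw [hv, hw] at this
      simpa [real_inner_smul_left, real_inner_smul_right] using this
    have : (μ - ν) * (inner ℝ v w : ℝ) = 0 := by ring_nf; linarith
    rcases mul_eq_zero.mp this with h | h
    · exact absurd (sub_eq_zero.mp h) hμν
    · exact h
end

section
/- If a second-order linear differential operator L(y) = a(x)y'' + b(x)y'' + c(x)y with polynomial coefficients has three polynomial eigenfunctions of pairwise distinct degrees, then deg a ≤ 2, deg b ≤ 1, and c is constant. -/
open Polynomial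

lemma key9 (a b c : ℝ[X]) (k : ℕ) (hk : 1 ≤ k)
    (ha : a.natDegree ≤ k + 2) (hb : b.natDegree ≤ k + 1) (hc : c.natDegree ≤ k)
    (p : ℝ[X]) (hp : p ≠ 0) (lam : ℝ)
    (hL : a * derivative (derivative p) + b * derivative p + c * p = C lam * p) :
    (p.natDegree : ℝ) * ((p.natDegree : ℝ) - 1) * a.coeff (k + 2)
      + (p.natDegree : ℝ) * b.coeff (k + 1) + c.coeff k = 0 := by
  set n := p.natDegree with hn
  have hlead : p.coeff n ≠ 0 := by
    simpa [hn] using leadingCoeff_ne_zero.mpr hp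
  -- coefficient of c * p at k + n
  have hcp : (c * p).coeff (k + n) = c.coeff k * p.coeff n :=
    coeff_mul_add_eq_of_natDegree_le hc le_rfl
  -- coefficient of C lam * p at k + n
  have hlp : (C lam * p).coeff (k + n) = 0 := by
    rw [coeff_mul_add_eq_of_natDegree_le (natDegree_C lam ▸ Nat.zero_le k) le_rfl,
      coeff_C, if_neg (by omega)]
    ring
  -- coefficient of b * p' at k + n
  have hbp : (b * derivative p).coeff (k + n) = (n : ℝ) * b.coeff (k + 1) * p.coeff n := by
    rcases Nat.eq_zero_or_pos n with h0 | h1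
    · have hp0 : p.natDegree = 0 := by omega
      have : derivative p = 0 := by
        rw [eq_C_of_natDegree_eq_zero hp0]; simp
      simp [this, h0]
    · have hd : (derivative p).natDegree ≤ n - 1 := natDegree_derivative_le p
      have heq : k + n = (k + 1) + (n - 1) := by omega
      rw [heq, coeff_mul_add_eq_of_natDegree_le hb hd, coeff_derivative]
      have : n - 1 + 1 = n := by omega
      rw [this]
      push_cast [Nat.cast_sub h1]
      ring
  -- coefficient of a * p'' at k + n
  have hap : (a * derivative (derivative p)).coeff (k + n)
      = (n : ℝ) * ((n : ℝ) - 1) * a.coeff (k + 2) * p.coeff n := by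
    rcases le_or_gt n 1 with h0 | h1
    · have hd1 : (derivative p).natDegree = 0 := by
        have := natDegree_derivative_le p
        omega
      have : derivative (derivative p) = 0 := by
        rw [eq_C_of_natDegree_eq_zero hd1]; simp
      interval_cases n <;> simp [this]
    · have hd : (derivative (derivative p)).natDegree ≤ n - 2 := by
        have h1' := natDegree_derivative_le p
        have h2 := natDegree_derivative_le (derivative p)
        omega
      have heq : k + n = (k + 2) + (n - 2) := by omega
      rw [heq, coeff_mul_add_eq_of_natDegree_le ha hd, coeff_derivative, coeff_derivative]
      have e1 : n - 2 + 1 = n - 1 := by omega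
      have e2 : n - 1 + 1 = n := by omega
      rw [e1, e2]
      rw [Nat.cast_sub (by omega : 1 ≤ n), Nat.cast_sub (by omega : 2 ≤ n)]
      push_cast
      ring
  have h0 : (a * derivative (derivative p) + b * derivative p + c * p).coeff (k + n)
      = (C lam * p).coeff (k + n) := by rw [hL]
  rw [coeff_add, coeff_add, hap, hbp, hcp, hlp] at h0
  have : ((n : ℝ) * ((n : ℝ) - 1) * a.coeff (k + 2)
      + (n : ℝ) * b.coeff (k + 1) + c.coeff k) * p.coeff n = 0 := by linarith [h0]
  rcases mul_eq_zero.mp this with h | h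
  · exact h
  · exact absurd h hlead

lemma quad9 (A B Cc x y z : ℝ) (hxy : x ≠ y) (hxz : x ≠ z) (hyz : y ≠ z)
    (e1 : x * (x - 1) * A + x * B + Cc = 0)
    (e2 : y * (y - 1) * A + y * B + Cc = 0)
    (e3 : z * (z - 1) * A + z * B + Cc = 0) :
    A = 0 ∧ B = 0 ∧ Cc = 0 := by
  have f1 : (x - y) * ((x + y - 1) * A + B) = 0 := by linear_combination e1 - e2
  have f2 : (x - z) * ((x + z - 1) * A + B) = 0 := by linear_combination e1 - e3
  have g1 : (x + y - 1) * A + B = 0 :=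
    (mul_eq_zero.mp f1).resolve_left (sub_ne_zero.mpr hxy)
  have g2 : (x + z - 1) * A + B = 0 :=
    (mul_eq_zero.mp f2).resolve_left (sub_ne_zero.mpr hxz)
  have hA0 : (y - z) * A = 0 := by linear_combination g1 - g2
  have hA : A = 0 := (mul_eq_zero.mp hA0).resolve_left (sub_ne_zero.mpr hyz)
  have hB : B = 0 := by linarith [g1, hA, mul_eq_zero_of_right (x + y - 1) hA]
  refine ⟨hA, hB, ?_⟩
  have := e1
  rw [hA, hB] at this
  linarith

/-- If `L(y) = a·y'' + b·y' + c·y` with polynomial coefficients has three nonzero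
polynomial eigenfunctions of pairwise distinct degrees, then
`deg a ≤ 2`, `deg b ≤ 1`, and `c` is constant. -/
theorem stmt9 (a b c : ℝ[X]) (p₁ p₂ p₃ : ℝ[X]) (lam₁ lam₂ lam₃ : ℝ)
    (h₁ : p₁ ≠ 0) (h₂ : p₂ ≠ 0) (h₃ : p₃ ≠ 0)
    (hdeg : p₁.natDegree ≠ p₂.natDegree ∧ p₁.natDegree ≠ p₃.natDegree ∧
            p₂.natDegree ≠ p₃.natDegree)
    (hL₁ : a * derivative (derivative p₁) + b * derivative p₁ + c * p₁ = C lam₁ * p₁)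
    (hL₂ : a * derivative (derivative p₂) + b * derivative p₂ + c * p₂ = C lam₂ * p₂)
    (hL₃ : a * derivative (derivative p₃) + b * derivative p₃ + c * p₃ = C lam₃ * p₃) :
    a.natDegree ≤ 2 ∧ b.natDegree ≤ 1 ∧ c.natDegree = 0 := by
  by_contra hcon
  -- set k
  set k : ℕ := max (a.natDegree - 2) (max (b.natDegree - 1) c.natDegree) with hkdef
  have hka : a.natDegree - 2 ≤ k := le_max_left _ _
  have hkb : b.natDegree - 1 ≤ k := (le_max_left _ _).trans (le_max_right _ _)
  have hkc : c.natDegree ≤ k := (le_max_right _ _).trans (le_max_right _ _)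
  have hbad : 3 ≤ a.natDegree ∨ 2 ≤ b.natDegree ∨ 1 ≤ c.natDegree := by
    by_contra h
    push_neg at h
    exact hcon ⟨by omega, by omega, by omega⟩
  have hk1 : 1 ≤ k := by
    rcases hbad with h | h | h
    · omega
    · omega
    · omega
  have ha : a.natDegree ≤ k + 2 := by omega
  have hb : b.natDegree ≤ k + 1 := by omega
  have hc : c.natDegree ≤ k := hkc
  have e1 := key9 a b c k hk1 ha hb hc p₁ h₁ lam₁ hL₁
  have e2 := key9 a b c k hk1 ha hb hc p₂ h₂ lam₂ hL₂
  have e3 := key9 a b c k hk1 ha hb hc p₃ h₃ lam₃ hL₃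
  obtain ⟨d12, d13, d23⟩ := hdeg
  have c12 : (p₁.natDegree : ℝ) ≠ p₂.natDegree := by exact_mod_cast d12
  have c13 : (p₁.natDegree : ℝ) ≠ p₃.natDegree := by exact_mod_cast d13
  have c23 : (p₂.natDegree : ℝ) ≠ p₃.natDegree := by exact_mod_cast d23
  obtain ⟨hA, hB, hC⟩ := quad9 (a.coeff (k + 2)) (b.coeff (k + 1)) (c.coeff k)
    _ _ _ c12 c13 c23 e1 e2 e3
  -- one of the coefficients must be nonzero
  have hmax : k = a.natDegree - 2 ∨ k = b.natDegree - 1 ∨ k = c.natDegree := by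
    rcases max_cases (a.natDegree - 2) (max (b.natDegree - 1) c.natDegree) with ⟨h, _⟩ | ⟨h, _⟩
    · left; omega
    · rcases max_cases (b.natDegree - 1) c.natDegree with ⟨h', _⟩ | ⟨h', _⟩
      · right; left; omega
      · right; right; omega
  rcases hmax with h | h | h
  · have hna : a.natDegree = k + 2 := by omega
    have ha0 : a ≠ 0 := fun h0 => by simp [h0] at hna
    apply leadingCoeff_ne_zero.mpr ha0
    rw [leadingCoeff, hna]; exact hA
  · rcases Nat.lt_or_ge b.natDegree 2 with hb2 | hb2
    ·
      -- b.natDegree - 1 ≤ 1... need k = 1 and b.natDegree ≤ 2? contradiction path: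
      -- k = b.natDegree - 1 ≤ 0 <  1 ≤ k
      omega
    · have hnb : b.natDegree = k + 1 := by omega
      have hb0 : b ≠ 0 := fun h0 => by rw [h0, natDegree_zero] at hnb; omega
      apply leadingCoeff_ne_zero.mpr hb0
      rw [leadingCoeff, hnb]; exact hB
  · rcases Nat.lt_or_ge c.natDegree 1 with hc1 | hc1
    · omega
    · have hc0 : c ≠ 0 := fun h0 => by rw [h0, natDegree_zero] at h; omega
      apply leadingCoeff_ne_zero.mpr hc0
      rw [leadingCoeff, ← h]; exact hC
end
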